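/- Define a_k(n) for n ≥ 3 and k ≥ 0 by a_0(3) = 1, a_k(3) = 0 for k ≥ 1, and a_k(n+1) = a_k(n) + a_{k-1}(n) + (1/2)·∑_{j=2}^{n-2} C(n,j)·∑_{l=0}^{k-1} a_l(j+1)·a_{k-1-l}(n-j+1) (with a_{-1}(n) := 0). Then a_1(n) = 2^{n-1} − n(n-1)/2 − 1 for all n ≥ 4. -/

import Mathlib

open Finset


theorem keel_a1 (a : ℕ → ℕ → ℚ) (h03 : a 0 3 = 1) (hk3 : ∀ k, 1 ≤ k → a k 3 = 0)
    (hrec : ∀ n, 3 ≤ n → ∀ k, a k (n + 1) =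
      a k n + (if k = 0 then 0 else a (k - 1) n) +
      (1/2 : ℚ) * ∑ j ∈ Icc 2 (n - 2), (n.choose j : ℚ) *
        ∑ l ∈ range k, a l (j + 1) * a (k - 1 - l) (n - j + 1)) :
    ∀ n, 4 ≤ n → a 1 n = 2 ^ (n - 1) - (n * (n - 1) : ℚ) / 2 - 1 := by
  have h0 : ∀ n, 3 ≤ n → a 0 n = 1 := by
    intro n hn
    induction n, hn using Nat.le_induction with
    | base => exact h03
    | succ n hn ih =>
      rw [hrec n hn 0]
      simp [ih]
  intro n hn
  induction n, hn using Nat.le_induction with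
  | base =>
    have h := hrec 3 le_rfl 1
    norm_num [hk3 1 le_rfl, h03, Finset.Icc_eq_empty_of_lt] at h
    norm_num [h]
  | succ n hn ih =>
    have h3 : 3 ≤ n := by omega
    rw [hrec n h3 1]
    have hsum : ∑ j ∈ Icc 2 (n-2), (n.choose j : ℚ) *
        ∑ l ∈ range 1, a l (j+1) * a (1-1-l) (n-j+1)
        = 2^n - 2 - 2*n := by
      have hterm : ∀ j ∈ Icc 2 (n-2), (n.choose j : ℚ) *
          ∑ l ∈ range 1, a l (j+1) * a (1-1-l) (n-j+1) = (n.choose j : ℚ) := by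
        intro j hj
        simp only [mem_Icc] at hj
        rw [Finset.sum_range_one]
        norm_num [h0 (j+1) (by omega), h0 (n-j+1) (by omega)]
      rw [Finset.sum_congr rfl hterm]
      have hsub : Icc 2 (n-2) ⊆ range (n+1) := by
        intro x hx; simp only [mem_Icc] at hx; simp; omega
      have htot : ∑ j ∈ range (n+1), (n.choose j : ℚ) = 2^n := by
        exact_mod_cast congrArg Nat.cast (Nat.sum_range_choose n)
      have hIcc := Finset.sum_sdiff_eq_sub (f := fun j => (n.choose j : ℚ)) hsub
      have hset : range (n+1) \ Icc 2 (n-2) = {0, 1, n-1, n} := by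
        ext x
        simp only [mem_sdiff, mem_range, mem_Icc, mem_insert, mem_singleton]
        omega
      have hfour : ∑ j ∈ ({0, 1, n-1, n} : Finset ℕ), (n.choose j : ℚ)
          = 2 + 2*n := by
        rw [Finset.sum_insert (by simp; omega), Finset.sum_insert (by simp; omega),
          Finset.sum_pair (by omega)]
        have : n.choose (n-1) = n := by
          rw [Nat.choose_symm (by omega), Nat.choose_one_right]
        simp [this]
        ring
      rw [hset, hfour] at hIcc
      have := hIcc
      linarith
    rw [hsum, ih, h0 n h3]
    have hrw : n = (n - 1) + 1 := by omega
    have hcast : ((n : ℚ) - 1) = ((n - 1 : ℕ) : ℚ) := by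
      have : (1:ℚ) ≤ n := by exact_mod_cast (by omega : 1 ≤ n)
      push_cast [Nat.cast_sub (by omega : 1 ≤ n)]; ring
    have hpow : (2:ℚ)^n = 2 * 2^(n-1) := by
      conv_lhs => rw [hrw]
      rw [pow_succ]; ring
    simp only [Nat.add_sub_cancel]
    rw [hpow]
    push_cast [Nat.cast_sub (by omega : 1 ≤ n)]
    ring
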